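/- arXiv:2509.18000 — 5 statements merged into one kernel-verified Lean document; each statement's English description precedes it below -/
import Mathlib

section
/- Let g be a probability measure on ℝ symmetric around zero (g(-dω) = g(dω)), γ = β + σ²/2 with β, σ > 0, and define P(z) := ∫_ℝ 1/((γ + iω - z)(σ²/2 + z - iω)) g(dω) for z in the strip S := {z ∈ ℂ : Re(z) ∈ (-σ²/2, γ)}. Then P is holomorphic on S, satisfies P(conj(z)) = conj(P(z)), and is symmetric with respect to β/2: P(z + β/2) = P(-z + β/2) for all z with z + β/2 and -z + β/2 in S. -/
open MeasureTheory Complex Metric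

set_option maxHeartbeats 1000000 in
/-- Symmetry and holomorphy properties of `P` on the strip
`S = { z : Re z ∈ (-σ²/2, γ) }`, for a symmetric probability measure `g`. -/
theorem stmt2 (β σ : ℝ) (hβ : 0 < β) (hσ : 0 < σ) (γ : ℝ) (hγ : γ = β + σ ^ 2 / 2)
    (g : Measure ℝ) [IsProbabilityMeasure g]
    (hsym : Measure.map (fun ω => -ω) g = g)
    (P : ℂ → ℂ)
    (hP : ∀ z, P z =
      ∫ ω, 1 / (((γ : ℂ) + Complex.I * ω - z) * ((σ : ℂ) ^ 2 / 2 + z - Complex.I * ω)) ∂g)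
    (S : Set ℂ) (hS : S = {z : ℂ | z.re ∈ Set.Ioo (-(σ ^ 2 / 2)) γ}) :
    DifferentiableOn ℂ P S ∧
    (∀ z ∈ S, P (starRingEnd ℂ z) = starRingEnd ℂ (P z)) ∧
    (∀ z : ℂ, z + β / 2 ∈ S → -z + β / 2 ∈ S → P (z + β / 2) = P (-z + β / 2)) := by
  -- the integrand
  set f : ℂ → ℝ → ℂ := fun z ω =>
    1 / (((γ : ℂ) + Complex.I * ω - z) * ((σ : ℂ) ^ 2 / 2 + z - Complex.I * ω)) with hfdef
  have hmeas : ∀ z : ℂ, AEStronglyMeasurable (f z) g := by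
    intro z
    apply Measurable.aestronglyMeasurable
    fun_prop
  -- substitution ω ↦ -ω
  have hsub : ∀ h : ℝ → ℂ, AEStronglyMeasurable h g →
      ∫ ω, h ω ∂g = ∫ ω, h (-ω) ∂g := by
    intro h hm
    calc ∫ ω, h ω ∂g = ∫ ω, h ω ∂(Measure.map (fun ω => -ω) g) := by rw [hsym]
      _ = ∫ ω, h (-ω) ∂g := integral_map measurable_neg.aemeasurable (hsym.symm ▸ hm)
  -- real part computations
  have hreA : ∀ (z : ℂ) (ω : ℝ), ((γ : ℂ) + Complex.I * ω - z).re = γ - z.re := by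
    intro z ω; simp
  have hreB : ∀ (z : ℂ) (ω : ℝ), ((σ : ℂ) ^ 2 / 2 + z - Complex.I * ω).re = σ ^ 2 / 2 + z.re := by
    intro z ω; simp [← Complex.ofReal_pow]
  have hnA : ∀ (z : ℂ) (ω : ℝ), γ - z.re ≤ ‖(γ : ℂ) + Complex.I * ω - z‖ := by
    intro z ω
    have h := Complex.abs_re_le_norm ((γ : ℂ) + Complex.I * ω - z)
    rw [hreA] at h
    exact le_trans (le_abs_self _) h
  have hnB : ∀ (z : ℂ) (ω : ℝ), σ ^ 2 / 2 + z.re ≤ ‖(σ : ℂ) ^ 2 / 2 + z - Complex.I * ω‖ := by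
    intro z ω
    have h := Complex.abs_re_le_norm ((σ : ℂ) ^ 2 / 2 + z - Complex.I * ω)
    rw [hreB] at h
    exact le_trans (le_abs_self _) h
  refine ⟨?_, ?_, ?_⟩
  · -- holomorphy
    rw [hS]
    intro z₀ hz₀
    obtain ⟨h1, h2⟩ := hz₀
    apply DifferentiableAt.differentiableWithinAt
    set ε : ℝ := min (γ - z₀.re) (σ ^ 2 / 2 + z₀.re) / 2 with hεdef
    have hm1 : min (γ - z₀.re) (σ ^ 2 / 2 + z₀.re) ≤ γ - z₀.re := min_le_left _ _
    have hm2 : min (γ - z₀.re) (σ ^ 2 / 2 + z₀.re) ≤ σ ^ 2 / 2 + z₀.re := min_le_right _ _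
    have hεpos : 0 < ε := by
      have := lt_min (show (0:ℝ) < γ - z₀.re by linarith) (show (0:ℝ) < σ ^ 2 / 2 + z₀.re by linarith)
      rw [hεdef]; linarith
    have hball : ∀ z ∈ ball z₀ ε, ε ≤ γ - z.re ∧ ε ≤ σ ^ 2 / 2 + z.re := by
      intro z hz
      have hd : ‖z - z₀‖ < ε := by rwa [mem_ball, dist_eq_norm] at hz
      have habs : |z.re - z₀.re| < ε := by
        have h := Complex.abs_re_le_norm (z - z₀)
        simp only [Complex.sub_re] at h
        exact lt_of_le_of_lt h hd
      obtain ⟨hl, hr⟩ := abs_lt.mp habs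
      constructor <;> · rw [hεdef] at *; linarith
    -- the derivative of the integrand
    set F' : ℂ → ℝ → ℂ := fun z ω =>
      (((σ : ℂ) ^ 2 / 2 + z - Complex.I * ω) - ((γ : ℂ) + Complex.I * ω - z)) /
        ((((γ : ℂ) + Complex.I * ω - z) * ((σ : ℂ) ^ 2 / 2 + z - Complex.I * ω)) ^ 2) with hF'def
    have hne : ∀ z ∈ ball z₀ ε, ∀ ω : ℝ,
        ((γ : ℂ) + Complex.I * ω - z) ≠ 0 ∧ ((σ : ℂ) ^ 2 / 2 + z - Complex.I * ω) ≠ 0 := by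
      intro z hz ω
      obtain ⟨hA, hB⟩ := hball z hz
      constructor
      · intro h
        have := hnA z ω; rw [h] at this; simp at this; linarith
      · intro h
        have := hnB z ω; rw [h] at this; simp at this; linarith
    have h_deriv : ∀ ω : ℝ, ∀ z ∈ ball z₀ ε, HasDerivAt (fun z => f z ω) (F' z ω) z := by
      intro ω z hz
      obtain ⟨hA0, hB0⟩ := hne z hz ω
      have hd1 : HasDerivAt (fun z : ℂ => (γ : ℂ) + Complex.I * ω - z) (-1) z := by
        simpa using (hasDerivAt_id z).const_sub ((γ : ℂ) + Complex.I * ω)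
      have hd2 : HasDerivAt (fun z : ℂ => (σ : ℂ) ^ 2 / 2 + z - Complex.I * ω) 1 z := by
        simpa using ((hasDerivAt_id z).const_add ((σ : ℂ) ^ 2 / 2)).sub_const (Complex.I * ω)
      have hd4 := (hd1.mul hd2).inv (mul_ne_zero hA0 hB0)
      have hfeq : (fun z => f z ω) =
          fun z => (((γ : ℂ) + Complex.I * ω - z) * ((σ : ℂ) ^ 2 / 2 + z - Complex.I * ω))⁻¹ := by
        funext w; simp [hfdef, one_div]
      rw [hfeq]
      refine hd4.congr_deriv ?_
      rw [hF'def]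
      simp only [Pi.mul_apply]
      ring
    have h_bound : ∀ᵐ ω ∂g, ∀ z ∈ ball z₀ ε, ‖F' z ω‖ ≤ 2 / ε ^ 3 := by
      filter_upwards with ω
      intro z hz
      obtain ⟨hA, hB⟩ := hball z hz
      set s := ‖(γ : ℂ) + Complex.I * ω - z‖ with hs
      set t := ‖(σ : ℂ) ^ 2 / 2 + z - Complex.I * ω‖ with ht
      have hεs : ε ≤ s := le_trans hA (hnA z ω)
      have hεt : ε ≤ t := le_trans hB (hnB z ω)
      have hnorm : ‖F' z ω‖ =
          ‖((σ : ℂ) ^ 2 / 2 + z - Complex.I * ω) - ((γ : ℂ) + Complex.I * ω - z)‖ /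
            (s ^ 2 * t ^ 2) := by
        rw [hF'def, hs, ht]
        simp [norm_div, norm_pow, norm_mul, mul_pow]
      rw [hnorm]
      have hnum : ‖((σ : ℂ) ^ 2 / 2 + z - Complex.I * ω) - ((γ : ℂ) + Complex.I * ω - z)‖ ≤ t + s :=
        norm_sub_le _ _
      calc ‖((σ : ℂ) ^ 2 / 2 + z - Complex.I * ω) - ((γ : ℂ) + Complex.I * ω - z)‖ / (s ^ 2 * t ^ 2)
          ≤ (t + s) / (s ^ 2 * t ^ 2) := by gcongr
        _ ≤ 2 / ε ^ 3 := by
            have hs0 : 0 < s := lt_of_lt_of_le hεpos hεs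
            have ht0 : 0 < t := lt_of_lt_of_le hεpos hεt
            rw [div_le_div_iff₀ (by positivity) (by positivity)]
            have e1 : ε ^ 3 ≤ s * t ^ 2 := by
              calc ε ^ 3 = ε * ε * ε := by ring
                _ ≤ s * t * t :=
                    mul_le_mul (mul_le_mul hεs hεt hεpos.le hs0.le) hεt hεpos.le (by positivity)
                _ = s * t ^ 2 := by ring
            have e2 : ε ^ 3 ≤ s ^ 2 * t := by
              calc ε ^ 3 = ε * ε * ε := by ring
                _ ≤ s * s * t :=
                    mul_le_mul (mul_le_mul hεs hεs hεpos.le hs0.le) hεt hεpos.le (by positivity)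
                _ = s ^ 2 * t := by ring
            nlinarith [mul_le_mul_of_nonneg_left e1 (le_trans hεpos.le hεt),
              mul_le_mul_of_nonneg_left e2 (le_trans hεpos.le hεs)]
    have hf_int : Integrable (f z₀) g := by
      apply Integrable.mono' (integrable_const (1 / ε ^ 2)) (hmeas z₀)
      filter_upwards with ω
      obtain ⟨hA, hB⟩ := hball z₀ (mem_ball_self hεpos)
      have hεs : ε ≤ ‖(γ : ℂ) + Complex.I * ω - z₀‖ := le_trans hA (hnA z₀ ω)
      have hεt : ε ≤ ‖(σ : ℂ) ^ 2 / 2 + z₀ - Complex.I * ω‖ := le_trans hB (hnB z₀ ω)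
      have : ‖f z₀ ω‖ =
          1 / (‖(γ : ℂ) + Complex.I * ω - z₀‖ * ‖(σ : ℂ) ^ 2 / 2 + z₀ - Complex.I * ω‖) := by
        rw [hfdef]; simp [norm_div, norm_mul]
      rw [this]
      apply one_div_le_one_div_of_le (by positivity)
      nlinarith
    have hF'meas : AEStronglyMeasurable (F' z₀) g := by
      apply Measurable.aestronglyMeasurable
      simp only [hF'def]
      fun_prop
    have hFmeas : ∀ᶠ z in nhds z₀, AEStronglyMeasurable (f z) g :=
      Filter.Eventually.of_forall fun z => hmeas z
    obtain ⟨-, hderiv⟩ := hasDerivAt_integral_of_dominated_loc_of_deriv_le (ball_mem_nhds z₀ hεpos) hFmeas hf_int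
      hF'meas h_bound (integrable_const _) (ae_of_all _ fun ω => fun z hz => h_deriv ω z hz)
    have hPeq : P = fun z => ∫ ω, f z ω ∂g := funext hP
    rw [hPeq]
    exact hderiv.differentiableAt
  · -- conjugation symmetry
    intro z _
    have hconj : ∀ ω : ℝ, f (starRingEnd ℂ z) (-ω) = starRingEnd ℂ (f z ω) := by
      intro ω
      rw [hfdef]
      simp only [map_div₀, map_one, map_mul, map_sub, map_add, Complex.conj_I,
        Complex.conj_ofReal, map_pow, map_ofNat, Complex.ofReal_neg]
      ring_nf
    rw [hP (starRingEnd ℂ z), hP z, ← integral_conj,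
      hsub (f (starRingEnd ℂ z)) (hmeas _)]
    exact integral_congr_ae (ae_of_all _ fun ω => hconj ω)
  · -- symmetry about β/2
    intro z _ _
    have hswap : ∀ ω : ℝ, f (z + β / 2) (-ω) = f (-z + β / 2) ω := by
      intro ω
      have hγc : (γ : ℂ) = (β : ℂ) + (σ : ℂ) ^ 2 / 2 := by rw [hγ]; push_cast; ring
      simp only [hfdef]
      rw [hγc]
      push_cast
      ring
    rw [hP (z + β / 2), hP (-z + β / 2), hsub (f (z + β / 2)) (hmeas _)]
    exact integral_congr_ae (ae_of_all _ fun ω => hswap ω)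
end

section
/- Let g be a probability measure on ℝ with finite second moment, γ = β + σ²/2 with β, σ > 0, and P(z) := ∫_ℝ g(dω)/((γ + iω - z)(σ²/2 + z - iω)). Then there exists a constant C(β,σ) such that for all z ∈ ℂ with Re(z) ∈ [0, β], |P(z)| ≤ (1 + ∫_ℝ ω² g(dω)) · C(β,σ)/Im(z)². -/
open MeasureTheory Complex


lemma key (β σ γ : ℝ) (hβ : 0 < β) (hσ : 0 < σ) (hγ : γ = β + σ ^ 2 / 2)
    (z : ℂ) (hz : z.re ∈ Set.Icc 0 β) (hy : z.im ≠ 0) (ω : ℝ) :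
    ‖1 / (((γ : ℂ) + Complex.I * ω - z) * ((σ : ℂ) ^ 2 / 2 + z - Complex.I * ω))‖
      ≤ (1 + ω ^ 2) * (4 + 16 / σ ^ 4) / z.im ^ 2 := by
  set a : ℂ := (γ : ℂ) + Complex.I * ω - z with ha_def
  set b : ℂ := (σ : ℂ) ^ 2 / 2 + z - Complex.I * ω with hb_def
  have hare : a.re = γ - z.re := by simp [ha_def]
  have haim : a.im = ω - z.im := by simp [ha_def]
  have hbre : b.re = σ ^ 2 / 2 + z.re := by simp [hb_def, ← Complex.ofReal_pow]
  have hbim : b.im = z.im - ω := by simp [hb_def, ← Complex.ofReal_pow]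
  have ha1 : σ ^ 2 / 2 ≤ ‖a‖ := by
    have h := Complex.abs_re_le_norm a
    have : σ ^ 2 / 2 ≤ a.re := by rw [hare]; have := hz.2; linarith
    calc σ ^ 2 / 2 ≤ a.re := this
      _ ≤ |a.re| := le_abs_self _
      _ ≤ ‖a‖ := h
  have ha2 : |ω - z.im| ≤ ‖a‖ := by
    have h := Complex.abs_im_le_norm a
    rwa [haim] at h
  have hb1 : σ ^ 2 / 2 ≤ ‖b‖ := by
    have h := Complex.abs_re_le_norm b
    have : σ ^ 2 / 2 ≤ b.re := by rw [hbre]; have := hz.1; linarith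
    calc σ ^ 2 / 2 ≤ b.re := this
      _ ≤ |b.re| := le_abs_self _
      _ ≤ ‖b‖ := h
  have hb2 : |z.im - ω| ≤ ‖b‖ := by
    have h := Complex.abs_im_le_norm b
    rwa [hbim] at h
  have hs2 : (0:ℝ) < σ ^ 2 / 2 := by positivity
  have hb2' : |ω - z.im| ≤ ‖b‖ := by rw [abs_sub_comm]; exact hb2
  have h1 : (ω - z.im) ^ 2 ≤ ‖a‖ * ‖b‖ := by
    calc (ω - z.im) ^ 2 = |ω - z.im| * |ω - z.im| := by rw [← _root_.sq_abs, sq]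
      _ ≤ ‖a‖ * ‖b‖ := mul_le_mul ha2 hb2' (abs_nonneg _) (norm_nonneg _)
  have h2 : σ ^ 4 / 4 ≤ ‖a‖ * ‖b‖ := by
    have : σ ^ 4 / 4 = (σ ^ 2 / 2) * (σ ^ 2 / 2) := by ring
    rw [this]
    exact mul_le_mul ha1 hb1 hs2.le (le_trans hs2.le ha1)
  have hN : 0 < ‖a‖ * ‖b‖ := lt_of_lt_of_le (by positivity) h2
  have hy2 : (0:ℝ) < z.im ^ 2 := by positivity
  rw [norm_div, norm_one, norm_mul, div_le_div_iff₀ hN hy2]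
  have hs4 : (0:ℝ) < σ ^ 4 := by positivity
  have hmain : z.im ^ 2 * σ ^ 4 ≤ (1 + ω ^ 2) * (4 * σ ^ 4 + 16) * (‖a‖ * ‖b‖) := by
    nlinarith [mul_le_mul_of_nonneg_left h1 hs4.le, mul_le_mul_of_nonneg_left h2 (sq_nonneg ω),
      sq_nonneg (2 * ω - z.im), sq_nonneg ω, hN.le, mul_nonneg hs4.le (sq_nonneg (2*ω - z.im)),
      mul_nonneg (mul_nonneg hs4.le (sq_nonneg ω)) hN.le]
  have hrw : 4 + 16 / σ ^ 4 = (4 * σ ^ 4 + 16) / σ ^ 4 := by field_simp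
  rw [hrw, one_mul]
  have heq : (1 + ω ^ 2) * ((4 * σ ^ 4 + 16) / σ ^ 4) * (‖a‖ * ‖b‖)
      = (1 + ω ^ 2) * (4 * σ ^ 4 + 16) * (‖a‖ * ‖b‖) / σ ^ 4 := by ring
  rw [heq, le_div_iff₀ hs4]
  linarith [hmain]

/-- Decay estimate for `P(z)` in the imaginary direction, on the strip `Re z ∈ [0, β]`,
with constant depending only on `β, σ`. -/
theorem stmt3 (β σ : ℝ) (hβ : 0 < β) (hσ : 0 < σ) (γ : ℝ) (hγ : γ = β + σ ^ 2 / 2) :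
    ∃ C : ℝ, 0 < C ∧
      ∀ (g : Measure ℝ), IsProbabilityMeasure g →
        Integrable (fun ω : ℝ => ω ^ 2) g →
        ∀ z : ℂ, z.re ∈ Set.Icc 0 β → z.im ≠ 0 →
          ‖∫ ω, 1 / (((γ : ℂ) + Complex.I * ω - z) * ((σ : ℂ) ^ 2 / 2 + z - Complex.I * ω)) ∂g‖
            ≤ (1 + ∫ ω, ω ^ 2 ∂g) * C / z.im ^ 2 := by
  refine ⟨4 + 16 / σ ^ 4, by positivity, ?_⟩
  intro g hg hint z hz hy
  have hy2 : (0:ℝ) < z.im ^ 2 := by positivity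
  have hboundInt : Integrable (fun ω : ℝ => (1 + ω ^ 2) * (4 + 16 / σ ^ 4) / z.im ^ 2) g := by
    have h1 : Integrable (fun ω : ℝ => 1 + ω ^ 2) g := (integrable_const 1).add hint
    have := (h1.mul_const ((4 + 16 / σ ^ 4) / z.im ^ 2))
    simpa [mul_div_assoc] using this
  calc ‖∫ ω, 1 / (((γ : ℂ) + Complex.I * ω - z) * ((σ : ℂ) ^ 2 / 2 + z - Complex.I * ω)) ∂g‖
      ≤ ∫ ω, ‖1 / (((γ : ℂ) + Complex.I * ω - z) * ((σ : ℂ) ^ 2 / 2 + z - Complex.I * ω))‖ ∂g :=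
        norm_integral_le_integral_norm _
    _ ≤ ∫ ω, (1 + ω ^ 2) * (4 + 16 / σ ^ 4) / z.im ^ 2 ∂g := by
        apply integral_mono_of_nonneg
        · exact Filter.Eventually.of_forall fun ω => norm_nonneg _
        · exact hboundInt
        · exact Filter.Eventually.of_forall fun ω => key β σ γ hβ hσ hγ z hz hy ω
    _ = (1 + ∫ ω, ω ^ 2 ∂g) * (4 + 16 / σ ^ 4) / z.im ^ 2 := by
        rw [show (fun ω : ℝ => (1 + ω ^ 2) * (4 + 16 / σ ^ 4) / z.im ^ 2)
            = (fun ω : ℝ => (1 + ω ^ 2) * ((4 + 16 / σ ^ 4) / z.im ^ 2)) from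
            funext fun ω => by ring]
        rw [integral_mul_const, integral_add (integrable_const 1) hint]
        simp [mul_div_assoc]
end

section
/- Let γ, σ, ω₀ > 0, β = γ - σ²/2 > 0, and Q(z, ω) := (z + σ²/2 - iω)(γ + iω - z). For real x with x > β, the Wronskian-type determinant D̃(x) := Q(x, -ω₀)·∂_z Q(x, ω₀) - ∂_z Q(x, -ω₀)·Q(x, ω₀) equals 2iω₀(2x² - 2xβ + γ² + σ⁴/4 + 2ω₀²) and is nonzero. -/
lemma derivQ (a b : ℂ) (z : ℂ) :
    deriv (fun w : ℂ => (w + a) * (b - w)) z = (b - z) - (z + a) := by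
  have h1 : HasDerivAt (fun w : ℂ => w + a) 1 z := (hasDerivAt_id z).add_const a
  have h2 : HasDerivAt (fun w : ℂ => b - w) (-1) z := by
    simpa using (hasDerivAt_id z).const_sub b
  have := (show HasDerivAt (fun w : ℂ => (w + a) * (b - w)) (1 * (b - z) + (z + a) * -1) z from h1.mul h2).deriv
  rw [this]; ring

/-- The Wronskian-type determinant
`D̃(x) = Q(x,-ω₀) ∂_z Q(x,ω₀) - ∂_z Q(x,-ω₀) Q(x,ω₀)` for real `x > β`:
explicit formula and non-vanishing. -/
theorem stmt10 (γ σ ω₀ : ℝ) (hγ : 0 < γ) (hσ : 0 < σ) (hω : 0 < ω₀)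
    (β : ℝ) (hβ : β = γ - σ ^ 2 / 2) (hβpos : 0 < β)
    (Q : ℂ → ℝ → ℂ)
    (hQ : ∀ z ω, Q z ω = (z + σ ^ 2 / 2 - Complex.I * ω) * ((γ : ℂ) + Complex.I * ω - z))
    (x : ℝ) (hx : β < x) :
    Q x (-ω₀) * deriv (fun z : ℂ => Q z ω₀) x
        - deriv (fun z : ℂ => Q z (-ω₀)) x * Q x ω₀
      = 2 * Complex.I * ω₀ *
          (2 * (x : ℂ) ^ 2 - 2 * x * β + γ ^ 2 + σ ^ 4 / 4 + 2 * ω₀ ^ 2) ∧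
    Q x (-ω₀) * deriv (fun z : ℂ => Q z ω₀) x
        - deriv (fun z : ℂ => Q z (-ω₀)) x * Q x ω₀ ≠ 0 := by
  have key : ∀ ω : ℝ, deriv (fun z : ℂ => Q z ω) x
      = ((γ : ℂ) + Complex.I * ω - x) - ((x : ℂ) + σ ^ 2 / 2 - Complex.I * ω) := by
    intro ω
    have : (fun z : ℂ => Q z ω)
        = fun z : ℂ => (z + ((σ : ℂ) ^ 2 / 2 - Complex.I * ω)) * (((γ : ℂ) + Complex.I * ω) - z) := by
      funext z; rw [hQ]; ring
    rw [this, derivQ]; ring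
  have heq : Q x (-ω₀) * deriv (fun z : ℂ => Q z ω₀) x
        - deriv (fun z : ℂ => Q z (-ω₀)) x * Q x ω₀
      = 2 * Complex.I * ω₀ *
          (2 * (x : ℂ) ^ 2 - 2 * x * β + γ ^ 2 + σ ^ 4 / 4 + 2 * ω₀ ^ 2) := by
    rw [key, key, hQ, hQ, hβ]
    push_cast
    linear_combination (-4*Complex.I*(ω₀:ℂ)^3) * Complex.I_sq
  refine ⟨heq, ?_⟩
  rw [heq]
  have hr : (2 * (x : ℂ) ^ 2 - 2 * x * β + γ ^ 2 + σ ^ 4 / 4 + 2 * ω₀ ^ 2)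
      = ((2 * x ^ 2 - 2 * x * β + γ ^ 2 + σ ^ 4 / 4 + 2 * ω₀ ^ 2 : ℝ) : ℂ) := by
    push_cast; ring
  rw [hr]
  have hpos : 0 < 2 * x ^ 2 - 2 * x * β + γ ^ 2 + σ ^ 4 / 4 + 2 * ω₀ ^ 2 := by
    nlinarith [sq_nonneg x, sq_nonneg σ, sq_nonneg ω₀, mul_pos (hβpos.trans hx) (sub_pos.mpr hx)]
  exact mul_ne_zero (mul_ne_zero (mul_ne_zero two_ne_zero Complex.I_ne_zero)
    (by exact_mod_cast hω.ne')) (Complex.ofReal_ne_zero.mpr hpos.ne')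
end

section
/- Let λ > 0 and let a(t) := c·ĝ(it)·(e^{γt}·1_{t<0} + e^{-(σ²/2)t}·1_{t≥0}) where c = κ/(σ² + 2γ), γ = β + σ²/2 with β, σ > 0, κ ≥ 0, and ĝ(it) = ∫_ℝ cos(ωt) g(dω) for a symmetric probability measure g on ℝ. Then a ∈ L¹(ℝ), and the bilateral Laplace transform ∫_ℝ e^{-zt} a(t) dt, for Re(z) ∈ (-σ²/2, γ), equals (κ/2)·P(z) where P(z) = ∫_ℝ g(dω)/((γ + iω - z)(σ²/2 + z - iω)). -/
open MeasureTheory Set Complex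

section helpers

lemma lapIntOn (c : ℂ) (hc : 0 < c.re) :
    IntegrableOn (fun t : ℝ => Complex.exp (-(c * t))) (Ioi 0) := by
  apply Integrable.mono' ((exp_neg_integrableOn_Ioi 0 hc))
    ((Measurable.aestronglyMeasurable (by fun_prop)).restrict)
  filter_upwards with t
  rw [Complex.norm_exp]
  simp

lemma lapIoi (c : ℂ) (hc : 0 < c.re) :
    ∫ t in Ioi (0:ℝ), Complex.exp (-(c * t)) = 1 / c := by
  have hc0 : c ≠ 0 := by
    intro h; rw [h] at hc; simp at hc
  have hderiv : ∀ t ∈ Ici (0:ℝ), HasDerivAt (fun t : ℝ => -(1/c) * Complex.exp (-(c * t)))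
      (Complex.exp (-(c * t))) t := by
    intro t _
    have h1 : HasDerivAt (fun t : ℝ => -(c * (t:ℂ))) (-c) t := by
      have h := ((Complex.ofRealCLM.hasDerivAt (x := t)).const_mul c).neg
      simp only [Complex.ofRealCLM_apply, Complex.ofReal_one, mul_one] at h
      exact h
    have := (h1.cexp).const_mul (-(1/c))
    convert this using 1
    · rfl
    · field_simp
  have htend : Filter.Tendsto (fun t : ℝ => -(1/c) * Complex.exp (-(c * t)))
      Filter.atTop (nhds 0) := by
    rw [tendsto_zero_iff_norm_tendsto_zero]
    have : (fun t : ℝ => ‖-(1/c) * Complex.exp (-(c * t))‖)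
        = fun t : ℝ => ‖(1/c)‖ * Real.exp (-(c.re * t)) := by
      funext t
      rw [norm_mul, norm_neg,
        Complex.norm_exp]
      norm_num
    rw [this, show (0:ℝ) = ‖(1/c)‖ * 0 by ring]
    apply Filter.Tendsto.const_mul
    apply Real.tendsto_exp_atBot.comp
    exact Filter.tendsto_neg_atTop_atBot.comp
      (Filter.Tendsto.const_mul_atTop hc Filter.tendsto_id)
  have := integral_Ioi_of_hasDerivAt_of_tendsto' hderiv (lapIntOn c hc) htend
  rw [this]; simp

lemma restrict_Iio_eq_map : (volume : Measure ℝ).restrict (Iio 0)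
    = Measure.map (fun x : ℝ => -x) ((volume : Measure ℝ).restrict (Ioi 0)) := by
  conv_lhs => rw [← Measure.map_neg_eq_self (volume : Measure ℝ)]
  rw [measurableEmbedding_neg.restrict_map]
  congr 1
  ext x
  simp

lemma lapIntOnIio (d : ℂ) (hd : 0 < d.re) :
    IntegrableOn (fun t : ℝ => Complex.exp (d * t)) (Iio 0) := by
  rw [IntegrableOn, restrict_Iio_eq_map, measurableEmbedding_neg.integrable_map_iff]
  apply (lapIntOn d hd).congr_fun ?_ measurableSet_Ioi
  intro x _; simp [Function.comp]

lemma lapIio (d : ℂ) (hd : 0 < d.re) :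
    ∫ t in Iio (0:ℝ), Complex.exp (d * t) = 1 / d := by
  have := integral_comp_neg_Ioi (c := 0) (f := fun t : ℝ => Complex.exp (d * t))
  simp only [neg_zero] at this
  rw [integral_Iic_eq_integral_Iio] at this
  rw [← this, ← lapIoi d hd]
  congr 1; funext t; norm_num

lemma rexpIntIio (d : ℝ) (hd : 0 < d) :
    IntegrableOn (fun t : ℝ => Real.exp (d * t)) (Iio 0) := by
  rw [IntegrableOn, restrict_Iio_eq_map, measurableEmbedding_neg.integrable_map_iff]
  apply (exp_neg_integrableOn_Ioi 0 hd).congr_fun ?_ measurableSet_Ioi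
  intro x _; simp [Function.comp]

lemma rexpIntIci (d : ℝ) (hd : 0 < d) :
    IntegrableOn (fun t : ℝ => Real.exp (-(d * t))) (Ici 0) := by
  rw [integrableOn_Ici_iff_integrableOn_Ioi]
  simpa [neg_mul] using exp_neg_integrableOn_Ioi 0 hd

end helpers

set_option maxHeartbeats 1000000 in
/-- The kernel `a` is integrable and its bilateral Laplace transform equals `(κ/2) P(z)`
on the strip `Re z ∈ (-σ²/2, γ)`. -/
theorem stmt13 (β σ κ : ℝ) (hβ : 0 < β) (hσ : 0 < σ) (hκ : 0 ≤ κ)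
    (γ : ℝ) (hγ : γ = β + σ ^ 2 / 2)
    (g : Measure ℝ) [IsProbabilityMeasure g]
    (hsym : Measure.map (fun ω => -ω) g = g)
    (a : ℝ → ℝ)
    (ha : ∀ t, a t = κ / (σ ^ 2 + 2 * γ) * (∫ ω, Real.cos (ω * t) ∂g) *
      (if t < 0 then Real.exp (γ * t) else Real.exp (-(σ ^ 2 / 2) * t))) :
    Integrable a ∧
    ∀ z : ℂ, z.re ∈ Set.Ioo (-(σ ^ 2 / 2)) γ →
      (∫ t : ℝ, Complex.exp (-z * t) * a t)
        = κ / 2 *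
          ∫ ω, 1 / (((γ : ℂ) + Complex.I * ω - z) * ((σ : ℂ) ^ 2 / 2 + z - Complex.I * ω)) ∂g := by
  have hσ2 : (0:ℝ) < σ ^ 2 / 2 := by positivity
  have hγ0 : 0 < γ := by rw [hγ]; positivity
  set c : ℝ := κ / (σ ^ 2 + 2 * γ) with hc
  set E : ℝ → ℝ := fun t => if t < 0 then Real.exp (γ * t) else Real.exp (-(σ ^ 2 / 2) * t)
    with hEdef
  set m : ℝ → ℝ := fun t => ∫ ω, Real.cos (ω * t) ∂g with hmdef
  have hEmeas : Measurable E := by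
    apply Measurable.ite (measurableSet_Iio (a := (0:ℝ))) <;> fun_prop
  have hEnn : ∀ t, 0 ≤ E t := by
    intro t; by_cases h : t < 0 <;> simp [hEdef, h, Real.exp_nonneg]
  have hmmeas : StronglyMeasurable m := by
    have hcm : StronglyMeasurable (fun p : ℝ × ℝ => Real.cos (p.2 * p.1)) :=
      Measurable.stronglyMeasurable (by fun_prop)
    exact hcm.integral_prod_right'
  have hmb : ∀ t, |m t| ≤ 1 := by
    intro t
    calc |m t| ≤ ∫ ω, |Real.cos (ω * t)| ∂g := by
          simpa [Real.norm_eq_abs] using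
            norm_integral_le_integral_norm (fun ω => Real.cos (ω * t)) (μ := g)
      _ ≤ ∫ _ω, (1:ℝ) ∂g := by
          apply integral_mono_of_nonneg
          · filter_upwards with ω; positivity
          · exact integrable_const 1
          · filter_upwards with ω; exact Real.abs_cos_le_one _
      _ = 1 := by simp
  -- integrability of exp(-x t) * E t for x in the strip
  have hbint : ∀ x : ℝ, -(σ ^ 2 / 2) < x → x < γ →
      Integrable (fun t => Real.exp (-x * t) * E t) := by
    intro x hx1 hx2
    have h1 : IntegrableOn (fun t => Real.exp (-x * t) * E t) (Iio 0) := by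
      apply (rexpIntIio (γ - x) (by linarith)).congr_fun ?_ measurableSet_Iio
      intro t ht
      simp only [hEdef, if_pos (mem_Iio.mp ht), ← Real.exp_add]
      ring_nf
    have h2 : IntegrableOn (fun t => Real.exp (-x * t) * E t) (Ici 0) := by
      apply (rexpIntIci (x + σ ^ 2 / 2) (by linarith)).congr_fun ?_ measurableSet_Ici
      intro t ht
      simp only [hEdef, if_neg (not_lt.mpr (mem_Ici.mp ht)), ← Real.exp_add]
      ring_nf
    have := h1.union h2
    rwa [Iio_union_Ici, integrableOn_univ] at this
  have hE1 : Integrable E := by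
    have := hbint 0 (by linarith) hγ0
    simpa using this
  have haeq : a = fun t => c * m t * E t := funext ha
  have haint : Integrable a := by
    rw [haeq]
    apply Integrable.mono' ((hE1.const_mul |c|))
      (((measurable_const.mul hmmeas.measurable).mul hEmeas).aestronglyMeasurable)
    filter_upwards with t
    show ‖c * m t * E t‖ ≤ |c| * E t
    rw [Real.norm_eq_abs, abs_mul, abs_mul, _root_.abs_of_nonneg (hEnn t)]
    have h0 := hEnn t
    exact mul_le_mul_of_nonneg_right (by nlinarith [abs_nonneg c, hmb t]) h0
  refine ⟨haint, ?_⟩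
  rintro z ⟨hz1, hz2⟩
  set A : ℝ → ℂ := fun ω => (γ : ℂ) + Complex.I * ω - z with hAdef
  set B : ℝ → ℂ := fun ω => (σ : ℂ) ^ 2 / 2 + z - Complex.I * ω with hBdef
  have hAre : ∀ ω, (A ω).re = γ - z.re := by
    intro ω; simp [hAdef]
  have hBre : ∀ ω, (B ω).re = σ ^ 2 / 2 + z.re := by
    intro ω; simp [hBdef, ← Complex.ofReal_pow]
  have hApos : ∀ ω, 0 < (A ω).re := fun ω => by rw [hAre]; linarith
  have hBpos : ∀ ω, 0 < (B ω).re := fun ω => by rw [hBre]; linarith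
  have hA0 : ∀ ω, A ω ≠ 0 := fun ω h => by simpa [h] using hApos ω
  have hB0 : ∀ ω, B ω ≠ 0 := fun ω h => by simpa [h] using hBpos ω
  -- the product kernel
  set H : ℝ → ℝ → ℂ := fun t ω =>
    Complex.exp (-z * t) * (E t : ℂ) * (Real.cos (ω * t) : ℂ) with hHdef
  have hHmeas : Measurable (Function.uncurry H) := by
    apply Measurable.mul
    apply Measurable.mul
    · exact Complex.measurable_exp.comp
        ((Complex.measurable_ofReal.comp measurable_fst).const_mul (-z))
    · exact Complex.measurable_ofReal.comp (hEmeas.comp measurable_fst)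
    · exact Complex.measurable_ofReal.comp
        (Real.measurable_cos.comp (measurable_snd.mul measurable_fst))
  have hHnorm : ∀ t ω, ‖H t ω‖ ≤ Real.exp (-z.re * t) * E t := by
    intro t ω
    rw [hHdef]
    simp only [norm_mul, Complex.norm_real, Real.norm_eq_abs]
    rw [Complex.norm_exp]
    have h1 : (-z * (t:ℂ)).re = -z.re * t := by simp
    rw [h1, _root_.abs_of_nonneg (hEnn t)]
    have := Real.abs_cos_le_one (ω * t)
    have h2 : (0:ℝ) ≤ Real.exp (-z.re * t) * E t := by positivity
    nlinarith [Real.exp_pos (-z.re * t), hEnn t, abs_nonneg (Real.cos (ω * t))]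
  have hHint : Integrable (Function.uncurry H) (volume.prod g) := by
    have hbz := hbint z.re hz1 hz2
    have h1 : Integrable (fun p : ℝ × ℝ => Real.exp (-z.re * p.1) * E p.1) (volume.prod g) := by
      have := hbz.mul_prod (integrable_const (1:ℝ) (μ := g))
      simpa using this
    apply Integrable.mono' h1 hHmeas.aestronglyMeasurable
    filter_upwards with p
    exact hHnorm p.1 p.2
  -- Step A and B : LHS = c * ∫ t, ∫ ω, H t ω
  have hstepA : (∫ t : ℝ, Complex.exp (-z * t) * a t)
      = (c : ℂ) * ∫ t : ℝ, ∫ ω, H t ω ∂g := by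
    rw [← integral_const_mul]
    congr 1; funext t
    have hBt : (∫ ω, H t ω ∂g) = Complex.exp (-z * t) * (E t : ℂ) * (m t : ℂ) := by
      rw [hHdef]
      simp only []
      rw [integral_const_mul]
      congr 1
      rw [hmdef]
      exact integral_ofReal (𝕜 := ℂ) (f := fun a : ℝ => Real.cos (a * t)) (μ := g)
    rw [hBt, ha t]
    push_cast
    ring
  rw [hstepA, integral_integral_swap hHint]
  -- inner t-integral
  have hin : ∀ ω : ℝ, (∫ t : ℝ, H t ω)
      = (1/2 : ℂ) * ((1 / A ω + 1 / B ω) + (1 / A (-ω) + 1 / B (-ω))) := by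
    intro ω
    set d1 : ℂ := (γ : ℂ) - z + Complex.I * ω with hd1
    set d2 : ℂ := (γ : ℂ) - z - Complex.I * ω with hd2
    set e1 : ℂ := z + (σ : ℂ) ^ 2 / 2 - Complex.I * ω with he1
    set e2 : ℂ := z + (σ : ℂ) ^ 2 / 2 + Complex.I * ω with he2
    have hd1re : 0 < d1.re := by
      have := hApos ω; rw [hAre] at this; simp [hd1]; linarith
    have hd2re : 0 < d2.re := by
      have := hApos ω; rw [hAre] at this; simp [hd2]; linarith
    have he1re : 0 < e1.re := by
      have := hBpos ω; rw [hBre] at this; simp [he1, ← Complex.ofReal_pow]; linarith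
    have he2re : 0 < e2.re := by
      have := hBpos ω; rw [hBre] at this; simp [he2, ← Complex.ofReal_pow]; linarith
    have hneg : ∀ t : ℝ, t < 0 → H t ω
        = (Complex.exp (d1 * t) + Complex.exp (d2 * t)) / 2 := by
      intro t ht
      rw [hHdef]
      simp only [hEdef, if_pos ht]
      rw [Complex.ofReal_cos, Complex.ofReal_exp, Complex.cos]
      rw [show d1 * t = -z * t + γ * t + (ω * t) * Complex.I by rw [hd1]; push_cast; ring,
        show d2 * t = -z * t + γ * t + -((ω*t) * Complex.I) by rw [hd2]; push_cast; ring,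
        Complex.exp_add, Complex.exp_add, Complex.exp_add, Complex.exp_add]
      push_cast
      ring
    have hpos : ∀ t : ℝ, 0 ≤ t → H t ω
        = (Complex.exp (-(e1 * t)) + Complex.exp (-(e2 * t))) / 2 := by
      intro t ht
      rw [hHdef]
      simp only [hEdef, if_neg (not_lt.mpr ht)]
      rw [Complex.ofReal_cos, Complex.ofReal_exp, Complex.cos]
      rw [show -(e1 * t) = -z * t + (-(σ^2/2) * t : ℝ) + (ω * t) * Complex.I by
            rw [he1]; push_cast; ring,
        show -(e2 * t) = -z * t + (-(σ^2/2) * t : ℝ) + -((ω*t) * Complex.I) by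
            rw [he2]; push_cast; ring,
        Complex.exp_add, Complex.exp_add, Complex.exp_add, Complex.exp_add]
      push_cast
      ring
    have hint1 : IntegrableOn (fun t : ℝ => H t ω) (Iio 0) := by
      exact IntegrableOn.congr_fun
        (((lapIntOnIio d1 hd1re).add (lapIntOnIio d2 hd2re)).div_const 2)
        (fun t ht => (hneg t ht).symm) measurableSet_Iio
    have hint2 : IntegrableOn (fun t : ℝ => H t ω) (Ici 0) := by
      have i1 : IntegrableOn (fun t : ℝ => Complex.exp (-(e1 * t))) (Ici 0) := by
        rw [integrableOn_Ici_iff_integrableOn_Ioi]; exact lapIntOn e1 he1re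
      have i2 : IntegrableOn (fun t : ℝ => Complex.exp (-(e2 * t))) (Ici 0) := by
        rw [integrableOn_Ici_iff_integrableOn_Ioi]; exact lapIntOn e2 he2re
      exact IntegrableOn.congr_fun ((i1.add i2).div_const 2)
        (fun t ht => (hpos t ht).symm) measurableSet_Ici
    rw [← intervalIntegral.integral_Iio_add_Ici hint1 hint2]
    have hI1 : (∫ t in Iio (0:ℝ), H t ω) = (1 / d1 + 1 / d2) / 2 := by
      rw [setIntegral_congr_fun measurableSet_Iio (fun t ht => hneg t ht)]
      rw [integral_div, integral_add (lapIntOnIio d1 hd1re) (lapIntOnIio d2 hd2re),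
        lapIio d1 hd1re, lapIio d2 hd2re]
    have hI2 : (∫ t in Ici (0:ℝ), H t ω) = (1 / e1 + 1 / e2) / 2 := by
      rw [setIntegral_congr_fun measurableSet_Ici (fun t ht => hpos t ht)]
      rw [integral_Ici_eq_integral_Ioi, integral_div,
        integral_add (lapIntOn e1 he1re) (lapIntOn e2 he2re),
        lapIoi e1 he1re, lapIoi e2 he2re]
    rw [hI1, hI2]
    have hAA : A ω = d1 := by rw [hAdef, hd1]; ring
    have hAB : A (-ω) = d2 := by rw [hAdef, hd2]; push_cast; ring
    have hBA : B ω = e1 := by rw [hBdef, he1]; ring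
    have hBB : B (-ω) = e2 := by rw [hBdef, he2]; push_cast; ring
    rw [hAA, hAB, hBA, hBB]
    ring
  rw [integral_congr_ae (Filter.Eventually.of_forall hin)]
  -- integrate over g
  set F : ℝ → ℂ := fun ω => 1 / A ω + 1 / B ω with hFdef
  have hFcont : Continuous F := by
    apply Continuous.add
    · exact continuous_const.div (by fun_prop) hA0
    · exact continuous_const.div (by fun_prop) hB0
  have hFbdd : ∀ ω, ‖F ω‖ ≤ 1 / (γ - z.re) + 1 / (σ ^ 2 / 2 + z.re) := by
    intro ω
    apply le_trans (norm_add_le _ _)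
    have n1 : ‖(1:ℂ) / A ω‖ ≤ 1 / (γ - z.re) := by
      rw [norm_div, norm_one, div_le_div_iff₀ (by simpa using hA0 ω) (by linarith)]
      have : γ - z.re ≤ ‖A ω‖ := by
        rw [← hAre ω]; exact Complex.re_le_norm (A ω)
      nlinarith [norm_nonneg (A ω)]
    have n2 : ‖(1:ℂ) / B ω‖ ≤ 1 / (σ ^ 2 / 2 + z.re) := by
      rw [norm_div, norm_one, div_le_div_iff₀ (by simpa using hB0 ω) (by linarith)]
      have : σ ^ 2 / 2 + z.re ≤ ‖B ω‖ := by
        rw [← hBre ω]; exact Complex.re_le_norm (B ω)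
      nlinarith [norm_nonneg (B ω)]
    linarith
  have hFint : Integrable F g := by
    apply Integrable.mono' (integrable_const (1 / (γ - z.re) + 1 / (σ ^ 2 / 2 + z.re)))
      hFcont.aestronglyMeasurable
    filter_upwards with ω; exact hFbdd ω
  have hFnegint : Integrable (fun ω => F (-ω)) g := by
    apply Integrable.mono' (integrable_const (1 / (γ - z.re) + 1 / (σ ^ 2 / 2 + z.re)))
      (hFcont.comp continuous_neg).aestronglyMeasurable
    filter_upwards with ω; exact hFbdd (-ω)
  have hsymint : (∫ ω, F (-ω) ∂g) = ∫ ω, F ω ∂g := by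
    conv_rhs => rw [← hsym]
    rw [show (fun ω : ℝ => -ω) = ((Homeomorph.neg ℝ).toMeasurableEquiv : ℝ → ℝ) from rfl,
      integral_map_equiv]
    rfl
  have hsplit : (∫ ω, (1/2 : ℂ) * ((1 / A ω + 1 / B ω) + (1 / A (-ω) + 1 / B (-ω))) ∂g)
      = ∫ ω, F ω ∂g := by
    rw [integral_const_mul]
    have : (fun ω : ℝ => (1 / A ω + 1 / B ω) + (1 / A (-ω) + 1 / B (-ω)))
        = fun ω => F ω + F (-ω) := by funext ω; rw [hFdef]
    rw [this, integral_add hFint hFnegint, hsymint]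
    ring
  rw [hsplit]
  -- partial fractions
  have hpf : (∫ ω, F ω ∂g) = ((γ : ℂ) + (σ:ℂ) ^ 2 / 2) * ∫ ω, 1 / (A ω * B ω) ∂g := by
    rw [← integral_const_mul]
    congr 1; funext ω
    simp only [hFdef]
    have hsum : A ω + B ω = (γ : ℂ) + (σ:ℂ) ^ 2 / 2 := by rw [hAdef, hBdef]; ring
    rw [div_add_div _ _ (hA0 ω) (hB0 ω), one_mul, mul_one, add_comm (B ω) (A ω), hsum,
      mul_one_div]
  rw [hpf]
  rw [← mul_assoc]
  congr 1
  have hne : σ ^ 2 + 2 * γ ≠ 0 := by positivity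
  rw [hc]
  push_cast
  have : ((σ:ℂ) ^ 2 + 2 * γ) ≠ 0 := by
    exact_mod_cast Complex.ofReal_ne_zero.mpr (by push_cast; exact hne)
  field_simp
  ring
end

section
/- Let κ ≥ 0, β, σ > 0, and let g be a probability measure on ℝ. Let m be the uniform probability measure on the torus 𝕋. Then for the Kuramoto mean field game with interaction cost c(x, μ) := ∫ 2sin²((x-y)/2) μ(dy, dω) and cost functional J^{ω,μ}(α) = E∫₀^∞ e^{-βt}(α_t²/2 + κc(X_t^{ω,α}, μ_t))dt with dX^{ω,α}_t = (α_t + ω)dt + σdB_t on 𝕋, the product measure m ⊗ g is a stationary solution: the constant flow μ_t = m ⊗ g admits, for every ω, the optimal control α ≡ 0 with L(X_t^{ω,0}) = m for all t when X₀^ω ~ m. -/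
open MeasureTheory

instance : Fact (0 < 2 * Real.pi) := ⟨by positivity⟩

/-- The `g`-uniform measure `m ⊗ g` is a stationary solution of the Kuramoto MFG:
the interaction cost `c(x, m ⊗ g)` is constantly `1` (here
`2 sin²((x-y)/2) = 1 - cos(x-y)` on the torus `𝕋 = ℝ/2πℤ`), hence any admissible
control incurs at least the cost of the control `α ≡ 0`, and the uniform law is
preserved by the uncontrolled dynamics `X_t = X₀ + ωt + σB_t` (addition of any
independent increment leaves the uniform measure on the torus invariant). -/
theorem stmt18 (κ β σ : ℝ) (hκ : 0 ≤ κ) (hβ : 0 < β) (hσ : 0 < σ)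
    (g : Measure ℝ) [IsProbabilityMeasure g]
    (m : Measure (AddCircle (2 * Real.pi)))
    (hm : m = ENNReal.ofReal (2 * Real.pi)⁻¹ • volume)
    (c : AddCircle (2 * Real.pi) → Measure (AddCircle (2 * Real.pi) × ℝ) → ℝ)
    (hc : ∀ x μ', c x μ' = ∫ p, (1 - Real.cos_periodic.lift (x - p.1)) ∂μ') :
    (∀ x, c x (m.prod g) = 1) ∧
    (∀ ν : Measure (AddCircle (2 * Real.pi)), IsProbabilityMeasure ν →
      Measure.map (fun q : AddCircle (2 * Real.pi) × AddCircle (2 * Real.pi) => q.1 + q.2)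
        (m.prod ν) = m) ∧
    (∀ (Ω' : Type) (_ : MeasurableSpace Ω') (μΩ : Measure Ω'), IsProbabilityMeasure μΩ →
      ∀ (α : ℝ → Ω' → ℝ) (X : ℝ → Ω' → AddCircle (2 * Real.pi)),
        (∀ t, Integrable (fun ω' => (α t ω') ^ 2 / 2) μΩ) →
        (∀ t, Integrable (fun ω' => c (X t ω') (m.prod g)) μΩ) →
        IntegrableOn (fun t => Real.exp (-β * t) *
          ∫ ω', ((α t ω') ^ 2 / 2 + κ * c (X t ω') (m.prod g)) ∂μΩ) (Set.Ioi 0) →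
        (∫ t in Set.Ioi (0 : ℝ), Real.exp (-β * t) *
            ∫ ω', ((α t ω') ^ 2 / 2 + κ * c (X t ω') (m.prod g)) ∂μΩ)
          ≥ ∫ t in Set.Ioi (0 : ℝ), Real.exp (-β * t) * κ) := by
  have hπ : (0 : ℝ) < 2 * Real.pi := by positivity
  -- `m` is a probability measure
  haveI hmp : IsProbabilityMeasure m := by
    constructor
    rw [hm]
    simp only [Measure.smul_apply, smul_eq_mul, AddCircle.measure_univ]
    rw [ENNReal.ofReal_inv_of_pos hπ]
    exact ENNReal.inv_mul_cancel (ENNReal.ofReal_pos.mpr hπ).ne' ENNReal.ofReal_ne_top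
  -- continuity of the lifted cosine
  have hcont : Continuous (Real.cos_periodic.lift : AddCircle (2 * Real.pi) → ℝ) := by
    apply Real.continuous_cos.quotient_liftOn'
  -- the mean of the lifted cosine over the uniform measure vanishes
  have hmean : ∫ z : AddCircle (2 * Real.pi), Real.cos_periodic.lift z ∂volume = 0 := by
    rw [← AddCircle.integral_preimage (2 * Real.pi) 0 Real.cos_periodic.lift]
    simp only [Function.Periodic.lift_coe]
    rw [← intervalIntegral.integral_of_le (by positivity : (0:ℝ) ≤ 0 + 2 * Real.pi)]
    simp
  -- Part 1: the interaction cost is constantly 1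
  have hone : ∀ x, c x (m.prod g) = 1 := by
    intro x
    rw [hc]
    have hmap : (m.prod g).map Prod.fst = m := by
      rw [Measure.map_fst_prod, measure_univ, one_smul]
    have hmeas : AEStronglyMeasurable
        (fun y : AddCircle (2 * Real.pi) => 1 - Real.cos_periodic.lift (x - y))
        ((m.prod g).map Prod.fst) :=
      (continuous_const.sub (hcont.comp (continuous_const.sub continuous_id))).aestronglyMeasurable
    have h1 : ∫ y, (1 - Real.cos_periodic.lift (x - y)) ∂m
        = ∫ p, (1 - Real.cos_periodic.lift (x - p.1)) ∂(m.prod g) := by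
      conv_lhs => rw [← hmap]
      exact integral_map measurable_fst.aemeasurable hmeas
    rw [← h1]
    have hint : Integrable (fun y : AddCircle (2 * Real.pi) =>
        Real.cos_periodic.lift (x - y)) m :=
      (hcont.comp (continuous_const.sub continuous_id)).integrable_of_hasCompactSupport
        (HasCompactSupport.of_compactSpace _)
    rw [integral_sub (integrable_const 1) hint, integral_const, probReal_univ]
    have h2 : ∫ y, Real.cos_periodic.lift (x - y) ∂m
        = ∫ z, Real.cos_periodic.lift z ∂m := by
      have hmps : Measure.map (fun y : AddCircle (2 * Real.pi) => x - y) m = m := by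
        rw [hm, Measure.map_smul, Measure.map_sub_left_eq_self volume x]
      conv_rhs => rw [← hmps]
      exact (integral_map (measurable_const.sub measurable_id).aemeasurable
        hcont.aestronglyMeasurable).symm
    have h3 : ∫ z, Real.cos_periodic.lift z ∂m = 0 := by
      rw [hm, integral_smul_measure, hmean, smul_zero]
    rw [h2, h3]
    simp
  refine ⟨hone, ?_, ?_⟩
  · -- Part 2: the uniform measure is invariant under independent increments
    intro ν hν
    haveI : Measure.IsAddRightInvariant m := hm ▸ inferInstanceAs
      (Measure.IsAddRightInvariant (ENNReal.ofReal (2 * Real.pi)⁻¹ •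
        (volume : Measure (AddCircle (2 * Real.pi)))))
    have h1 : (fun q : AddCircle (2 * Real.pi) × AddCircle (2 * Real.pi) => q.1 + q.2)
        = Prod.fst ∘ (fun z : AddCircle (2 * Real.pi) × AddCircle (2 * Real.pi) =>
            (z.1 + z.2, z.2)) := rfl
    rw [h1, ← Measure.map_map measurable_fst
        ((show Measurable (fun z : AddCircle (2 * Real.pi) × AddCircle (2 * Real.pi) => z.1 + z.2) from
          measurable_fst.add measurable_snd).prodMk measurable_snd),
      (measurePreserving_add_prod m ν).map_eq, Measure.map_fst_prod, measure_univ, one_smul]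
  · -- Part 3: the zero control is optimal
    intro Ω' _ μΩ hμΩ α X hα hcX hint
    apply setIntegral_mono_on
    · exact (exp_neg_integrableOn_Ioi 0 hβ).mul_const κ
    · exact hint
    · exact measurableSet_Ioi
    · intro t _
      have hκle : κ ≤ ∫ ω', ((α t ω') ^ 2 / 2 + κ * c (X t ω') (m.prod g)) ∂μΩ := by
        have heq : (fun ω' => (α t ω') ^ 2 / 2 + κ * c (X t ω') (m.prod g))
            = fun ω' => (α t ω') ^ 2 / 2 + κ := by
          funext ω'; rw [hone, mul_one]
        rw [heq, integral_add (hα t) (integrable_const κ), integral_const, probReal_univ]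
        simp only [ENNReal.toReal_one, one_smul]
        have : 0 ≤ ∫ ω', (α t ω') ^ 2 / 2 ∂μΩ :=
          integral_nonneg fun ω' => by positivity
        linarith
      exact mul_le_mul_of_nonneg_left hκle (Real.exp_nonneg _)
end
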